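/- Let λ ∈ {1,-1}, ρ ∈ ℝ, q ∈ ℂ, and set p = ρq (the homogeneous Robin condition q_x(0,t) = ρ q(0,t)). Define N(k) = diag(2k - iρ, -(2k + iρ)). Then for every k ∈ ℂ, (2ik²σ₃ - Q̃(-k)) · N(k) = N(k) · (2ik²σ₃ - Q̃(k)), where Q̃ is built from the pair (q,p). -/

import Mathlib

open Complex Matrix

/-- The Pauli matrix `σ₃ = diag(1,-1)`. -/
def sigma3 : Matrix (Fin 2) (Fin 2) ℂ := !![1, 0; 0, -1]

/-- The matrix `Q̃(k)` built from boundary values `q = q(0,t)`, `p = qₓ(0,t)`: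
`Q̃(k) = [[iλ|q|², 2kq + ip], [-2kλ·conj(q) + iλ·conj(p), -iλ|q|²]]`. -/
noncomputable def Qtilde (lam q p k : ℂ) : Matrix (Fin 2) (Fin 2) ℂ :=
  !![Complex.I * lam * ((‖q‖ : ℝ) : ℂ) ^ 2, 2 * k * q + Complex.I * p;
     -2 * k * lam * (starRingEnd ℂ) q + Complex.I * lam * (starRingEnd ℂ) p,
     -(Complex.I * lam * ((‖q‖ : ℝ) : ℂ) ^ 2)]

/-- For the homogeneous Robin boundary condition `p = ρq`, the matrix
`N(k) = diag(2k - iρ, -(2k + iρ))` intertwines `2ik²σ₃ - Q̃(-k)` and `2ik²σ₃ - Q̃(k)`. -/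
theorem robin_symmetry (lam : ℂ) (hlam : lam = 1 ∨ lam = -1) (ρ : ℝ) (q : ℂ) :
    ∀ k : ℂ,
      ((2 * Complex.I * k ^ 2) • sigma3 - Qtilde lam q ((ρ : ℂ) * q) (-k))
          * !![2 * k - Complex.I * (ρ : ℂ), 0; 0, -(2 * k + Complex.I * (ρ : ℂ))]
        = !![2 * k - Complex.I * (ρ : ℂ), 0; 0, -(2 * k + Complex.I * (ρ : ℂ))]
          * ((2 * Complex.I * k ^ 2) • sigma3 - Qtilde lam q ((ρ : ℂ) * q) k) := by
  intro k
  ext i j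
  fin_cases i <;> fin_cases j <;>
    simp [sigma3, Qtilde, Matrix.mul_apply, Fin.sum_univ_two, _root_.map_mul, Complex.conj_ofReal] <;>
    ring
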